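/- Theorem 1, part 1 (positivity of the multiplex total distance): For every ω ∈ [0,1], Δ_M(ω) > 0. -/

import Mathlib

open Matrix

/-- The communicability matrix `G(ω) = exp(A + ω·C)` of the multiplex with
inter-layer intensity `ω`. -/
noncomputable def commMat {N : ℕ} (A C : Matrix (Fin N) (Fin N) ℝ) (ω : ℝ) :
    Matrix (Fin N) (Fin N) ℝ :=
  NormedSpace.exp (A + ω • C)

/-- The communicability distance `ξ_{ij}(ω) = G(ω)_{ii} + G(ω)_{jj} - 2 G(ω)_{ij}`. -/
noncomputable def commXi {N : ℕ} (A C : Matrix (Fin N) (Fin N) ℝ) (ω : ℝ) (i j : Fin N) : ℝ :=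
  commMat A C ω i i + commMat A C ω j j - 2 * commMat A C ω i j

/-- The multiplex total distance `Δ_M(ω) = (1/(N-1)) ∑_{i,j} ξ_{ij}(ω)`. -/
noncomputable def totalDist {N : ℕ} (A C : Matrix (Fin N) (Fin N) ℝ) (ω : ℝ) : ℝ :=
  (1 / ((N : ℝ) - 1)) * ∑ i, ∑ j, commXi A C ω i j

/-- quadratic form of exp of a symmetric matrix is nonneg, pos on nonzero vectors -/
lemma quad_exp_pos {N : ℕ} (M : Matrix (Fin N) (Fin N) ℝ) (hM : Mᵀ = M) (v : Fin N → ℝ) :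
    0 ≤ v ⬝ᵥ (NormedSpace.exp M) *ᵥ v ∧
      (v ≠ 0 → 0 < v ⬝ᵥ (NormedSpace.exp M) *ᵥ v) := by
  set B := NormedSpace.exp ((2:ℝ)⁻¹ • M) with hB
  have hBsymm : Bᵀ = B := by
    rw [hB, ← Matrix.exp_transpose, Matrix.transpose_smul, hM]
  have hsplit : NormedSpace.exp M = B * B := by
    have h2 : (2:ℝ)⁻¹ • M + (2:ℝ)⁻¹ • M = M := by
      rw [← two_smul ℝ, smul_smul]; norm_num
    have := Matrix.exp_add_of_commute ((2:ℝ)⁻¹ • M) ((2:ℝ)⁻¹ • M) (Commute.refl _)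
    rw [h2] at this
    rw [this, hB]
  have hquad : v ⬝ᵥ (NormedSpace.exp M) *ᵥ v = (B *ᵥ v) ⬝ᵥ (B *ᵥ v) := by
    rw [hsplit, ← Matrix.mulVec_mulVec, Matrix.dotProduct_mulVec, ← Matrix.mulVec_transpose,
      hBsymm]
  constructor
  · rw [hquad]; exact Finset.sum_nonneg fun k _ => mul_self_nonneg _
  · intro hv
    rw [hquad]
    have hBv : B *ᵥ v ≠ 0 := by
      intro h
      apply hv
      have hinv : NormedSpace.exp (-((2:ℝ)⁻¹ • M)) * B = 1 := by
        have := Matrix.exp_add_of_commute (-((2:ℝ)⁻¹ • M)) ((2:ℝ)⁻¹ • M)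
          (Commute.refl _).neg_left
        rw [neg_add_cancel, NormedSpace.exp_zero] at this
        rw [hB, ← this]
      calc v = (NormedSpace.exp (-((2:ℝ)⁻¹ • M)) * B) *ᵥ v := by rw [hinv, Matrix.one_mulVec]
        _ = NormedSpace.exp (-((2:ℝ)⁻¹ • M)) *ᵥ (B *ᵥ v) := by rw [Matrix.mulVec_mulVec]
        _ = 0 := by rw [h, Matrix.mulVec_zero]
    have := dotProduct_self_eq_zero (v := B *ᵥ v)
    rcases lt_or_eq_of_le (Finset.sum_nonneg fun k (_ : k ∈ Finset.univ) =>
      mul_self_nonneg ((B *ᵥ v) k)) with h | h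
    · exact h
    · exact absurd (this.mp h.symm) hBv

lemma quad_single {N : ℕ} (G : Matrix (Fin N) (Fin N) ℝ) (hG : Gᵀ = G) (i j : Fin N) :
    (Pi.single i 1 - Pi.single j 1) ⬝ᵥ G *ᵥ (Pi.single i 1 - Pi.single j 1)
      = G i i + G j j - 2 * G i j := by
  have hji : G j i = G i j := congrFun (congrFun hG i) j
  simp [dotProduct_sub, sub_dotProduct, Matrix.mulVec_sub,
    Matrix.mulVec_single, single_dotProduct, dotProduct_single, hji]
  ring

/-- Theorem 1, part 1: the multiplex total distance is positive on `[0,1]`. -/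
theorem totalDist_pos {N : ℕ} (hN : 2 ≤ N) (A C : Matrix (Fin N) (Fin N) ℝ)
    (hA : Aᵀ = A) (hC : Cᵀ = C) :
    ∀ ω ∈ Set.Icc (0 : ℝ) 1, 0 < totalDist A C ω := by
  intro ω _
  have hM : (A + ω • C)ᵀ = A + ω • C := by
    rw [Matrix.transpose_add, Matrix.transpose_smul, hA, hC]
  have hG : (commMat A C ω)ᵀ = commMat A C ω := by
    rw [commMat, ← Matrix.exp_transpose, hM]
  have hxi : ∀ i j : Fin N, commXi A C ω i j =
      (Pi.single i 1 - Pi.single j 1) ⬝ᵥ (commMat A C ω) *ᵥ (Pi.single i 1 - Pi.single j 1) := by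
    intro i j
    rw [quad_single _ hG, commXi]
  have hnn : ∀ i j : Fin N, 0 ≤ commXi A C ω i j := by
    intro i j; rw [hxi]
    exact (quad_exp_pos _ hM _).1
  let i0 : Fin N := ⟨0, by omega⟩
  let i1 : Fin N := ⟨1, by omega⟩
  have hi0 : i0 ≠ i1 := by
    intro h
    have := congrArg Fin.val h
    simp [i0, i1] at this
  have hpos : 0 < commXi A C ω i0 i1 := by
    rw [hxi]
    refine (quad_exp_pos _ hM _).2 ?_
    intro h
    have := congrFun h i0
    simp [Pi.single_apply, hi0, hi0.symm] at this
  have hsum : 0 < ∑ i, ∑ j, commXi A C ω i j := by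
    refine Finset.sum_pos' (fun i _ => Finset.sum_nonneg fun j _ => hnn i j) ⟨i0, Finset.mem_univ _, ?_⟩
    exact Finset.sum_pos' (fun j _ => hnn i0 j) ⟨i1, Finset.mem_univ _, hpos⟩
  have hcoef : 0 < 1 / ((N : ℝ) - 1) := by
    have h1 : (1 : ℝ) < N := by exact_mod_cast lt_of_lt_of_le (by norm_num) hN
    have : (0:ℝ) < (N:ℝ) - 1 := by linarith
    positivity
  exact mul_pos hcoef hsum
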